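/- Let ρ be a density matrix on ℂ^{d_A} ⊗ ℂ^{d_B} (a matrix indexed by pairs of indices), and let E_A be a CPTP map on the d_A×d_A complex matrices such that (E_A ⊗ Id)(ρ) = ρ, where E_A ⊗ Id acts as E_A on the first tensor factor and trivially on the second. Then E_A(X) = X for every X in the operator Schmidt span Σ_A(ρ), and consequently (E_A ⊗ Id)(Z) = Z for every Z ∈ Σ_A(ρ) ⊗ M_{d_B}. -/

import Mathlib

open Matrix
open scoped ComplexOrder Kronecker

/-- The subspace `W ⊗ M_{d_B}` of matrices on `ℂ^{d_A} ⊗ ℂ^{d_B}`: the span of Kronecker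
products `A ⊗ₖ B` with `A ∈ W`. -/
noncomputable def tensorExt {dA dB : ℕ} (W : Submodule ℂ (Matrix (Fin dA) (Fin dA) ℂ)) :
    Submodule ℂ (Matrix (Fin dA × Fin dB) (Fin dA × Fin dB) ℂ) :=
  Submodule.span ℂ {Z | ∃ A ∈ W, ∃ B : Matrix (Fin dB) (Fin dB) ℂ, Z = A ⊗ₖ B}

/-- The operator Schmidt span `Σ_A(ρ)` of a matrix on `ℂ^{d_A} ⊗ ℂ^{d_B}`: the smallest
subspace `W` of `M_{d_A}` with `ρ ∈ W ⊗ M_{d_B}`. -/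
noncomputable def opSchmidtSpan {dA dB : ℕ}
    (ρ : Matrix (Fin dA × Fin dB) (Fin dA × Fin dB) ℂ) :
    Submodule ℂ (Matrix (Fin dA) (Fin dA) ℂ) :=
  sInf {W | ρ ∈ tensorExt (dB := dB) W}


section aux
variable {dA dB m : ℕ}

/-- The `(j,l)` slice of a matrix on the product space, as a linear map. -/
noncomputable def sliceMap (j l : Fin dB) :
    Matrix (Fin dA × Fin dB) (Fin dA × Fin dB) ℂ →ₗ[ℂ] Matrix (Fin dA) (Fin dA) ℂ where
  toFun Z := Matrix.of fun i p => Z (i, j) (p, l)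
  map_add' _ _ := rfl
  map_smul' _ _ := rfl

lemma kron_conjTranspose (A : Matrix (Fin dA) (Fin dA) ℂ)
    (B : Matrix (Fin dB) (Fin dB) ℂ) : (A ⊗ₖ B)ᴴ = Aᴴ ⊗ₖ Bᴴ := by
  ext ⟨i, j⟩ ⟨p, l⟩
  simp [conjTranspose_apply, kronecker_apply]

lemma sum_decomp (ρ : Matrix (Fin dA × Fin dB) (Fin dA × Fin dB) ℂ) :
    ρ = ∑ j : Fin dB, ∑ l : Fin dB,
      (sliceMap j l ρ) ⊗ₖ (Matrix.single j l (1 : ℂ)) := by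
  have hs : ∀ (j l : Fin dB) (a b : Fin dA), sliceMap j l ρ a b = ρ (a, j) (b, l) :=
    fun _ _ _ _ => rfl
  ext ⟨i, j⟩ ⟨p, l⟩
  simp only [Matrix.sum_apply, kronecker_apply, hs, LinearMap.coe_mk, AddHom.coe_mk,
    Matrix.of_apply, Matrix.single]
  rw [Finset.sum_eq_single j, Finset.sum_eq_single l] <;> simp +contextual [eq_comm]

lemma slice_conj (j l : Fin dB) (N : Matrix (Fin dA) (Fin dA) ℂ)
    (Z : Matrix (Fin dA × Fin dB) (Fin dA × Fin dB) ℂ) :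
    sliceMap j l ((N ⊗ₖ (1 : Matrix (Fin dB) (Fin dB) ℂ)) * Z *
      (N ⊗ₖ (1 : Matrix (Fin dB) (Fin dB) ℂ))ᴴ) = N * sliceMap j l Z * Nᴴ := by
  rw [kron_conjTranspose, conjTranspose_one]
  ext i p
  have hs : ∀ (Z' : Matrix (Fin dA × Fin dB) (Fin dA × Fin dB) ℂ) (a b : Fin dA),
      sliceMap j l Z' a b = Z' (a, j) (b, l) := fun _ _ _ => rfl
  simp only [hs]
  simp only [hs, Matrix.of_apply, mul_apply,
    kronecker_apply, one_apply, Fintype.sum_prod_type, mul_ite, mul_one, mul_zero,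
    ite_mul, zero_mul, Finset.sum_ite_eq, Finset.sum_ite_eq', Finset.mem_univ, if_true]

/-- The Kraus-form map as a linear map. -/
noncomputable def krausMap {n : Type*} [Fintype n] [DecidableEq n]
    (N : Fin m → Matrix n n ℂ) : Matrix n n ℂ →ₗ[ℂ] Matrix n n ℂ where
  toFun X := ∑ k, N k * X * (N k)ᴴ
  map_add' X Y := by simp [mul_add, add_mul, Finset.sum_add_distrib]
  map_smul' c X := by simp [Finset.smul_sum]

end aux

/-- If a density matrix `ρ` on `ℂ^{d_A} ⊗ ℂ^{d_B}` is invariant under `E_A ⊗ Id` for a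
CPTP map `E_A` (with Kraus operators `M k`), then `E_A` fixes every element of the
operator Schmidt span `Σ_A(ρ)`, and `E_A ⊗ Id` fixes every element of `Σ_A(ρ) ⊗ M_{d_B}`. -/
theorem invariance_of_operator_schmidt_span {dA dB m : ℕ}
    (ρ : Matrix (Fin dA × Fin dB) (Fin dA × Fin dB) ℂ)
    (hρ : ρ.PosSemidef) (hρtr : ρ.trace = 1)
    (EA : Matrix (Fin dA) (Fin dA) ℂ → Matrix (Fin dA) (Fin dA) ℂ)
    (M : Fin m → Matrix (Fin dA) (Fin dA) ℂ)
    (hKraus : ∀ X, EA X = ∑ k, M k * X * (M k)ᴴ)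
    (hTP : ∑ k, (M k)ᴴ * M k = 1)
    (hinv : (∑ k, (M k ⊗ₖ (1 : Matrix (Fin dB) (Fin dB) ℂ)) * ρ *
        (M k ⊗ₖ (1 : Matrix (Fin dB) (Fin dB) ℂ))ᴴ) = ρ) :
    (∀ X ∈ opSchmidtSpan ρ, EA X = X) ∧
    (∀ Z ∈ tensorExt (dB := dB) (opSchmidtSpan ρ),
      (∑ k, (M k ⊗ₖ (1 : Matrix (Fin dB) (Fin dB) ℂ)) * Z *
        (M k ⊗ₖ (1 : Matrix (Fin dB) (Fin dB) ℂ))ᴴ) = Z) := by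
    -- the span of the slices of ρ
  set S : Submodule ℂ (Matrix (Fin dA) (Fin dA) ℂ) :=
    Submodule.span ℂ {A | ∃ j l, A = sliceMap j l ρ} with hSdef
  -- ρ lies in tensorExt S
  have hmemS : ρ ∈ tensorExt (dB := dB) S := by
    rw [sum_decomp ρ]
    refine Submodule.sum_mem _ fun j _ => Submodule.sum_mem _ fun l _ => ?_
    exact Submodule.subset_span ⟨sliceMap j l ρ,
      Submodule.subset_span ⟨j, l, rfl⟩, _, rfl⟩
  -- hence opSchmidtSpan ρ ≤ S
  have hle : opSchmidtSpan ρ ≤ S := sInf_le hmemS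
  -- the slices are fixed by the Kraus map
  have hslice : ∀ j l : Fin dB, (∑ k, M k * sliceMap j l ρ * (M k)ᴴ) = sliceMap j l ρ := by
    intro j l
    calc (∑ k, M k * sliceMap j l ρ * (M k)ᴴ)
        = sliceMap j l (∑ k, (M k ⊗ₖ (1 : Matrix (Fin dB) (Fin dB) ℂ)) * ρ *
            (M k ⊗ₖ (1 : Matrix (Fin dB) (Fin dB) ℂ))ᴴ) := by
          rw [map_sum]; exact Finset.sum_congr rfl fun k _ => (slice_conj j l (M k) ρ).symm
      _ = sliceMap j l ρ := by rw [hinv]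
  -- every element of S is fixed by the Kraus map
  have hfix : ∀ X ∈ S, krausMap M X = X := by
    intro X hX
    refine Submodule.span_induction (p := fun X _ => krausMap M X = X) ?_ (map_zero _)
      (fun x y _ _ hx hy => show krausMap M (x + y) = x + y by rw [map_add, hx, hy])
      (fun c x _ hx => show krausMap M (c • x) = c • x by rw [LinearMap.map_smul, hx]) hX
    rintro _ ⟨j, l, rfl⟩
    exact hslice j l
  have hfix' : ∀ X ∈ opSchmidtSpan ρ, (∑ k, M k * X * (M k)ᴴ) = X :=
    fun X hX => hfix X (hle hX)
  refine ⟨fun X hX => by rw [hKraus, hfix' X hX], ?_⟩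
  -- second part
  intro Z hZ
  have : (krausMap (fun k => M k ⊗ₖ (1 : Matrix (Fin dB) (Fin dB) ℂ))) Z = Z := by
    refine Submodule.span_induction
      (p := fun Z _ => krausMap (fun k => M k ⊗ₖ (1 : Matrix (Fin dB) (Fin dB) ℂ)) Z = Z)
      ?_ (map_zero _)
      (fun x y _ _ hx hy => show _ = x + y by rw [map_add, hx, hy])
      (fun c x _ hx => show _ = c • x by rw [LinearMap.map_smul, hx]) hZ
    rintro _ ⟨A, hA, B, rfl⟩
    show (∑ k, (M k ⊗ₖ (1 : Matrix (Fin dB) (Fin dB) ℂ)) * (A ⊗ₖ B) *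
        (M k ⊗ₖ (1 : Matrix (Fin dB) (Fin dB) ℂ))ᴴ) = A ⊗ₖ B
    have : ∀ k, (M k ⊗ₖ (1 : Matrix (Fin dB) (Fin dB) ℂ)) * (A ⊗ₖ B) *
        (M k ⊗ₖ (1 : Matrix (Fin dB) (Fin dB) ℂ))ᴴ = (M k * A * (M k)ᴴ) ⊗ₖ B := by
      intro k
      rw [kron_conjTranspose, conjTranspose_one, ← Matrix.mul_kronecker_mul,
        ← Matrix.mul_kronecker_mul, one_mul, mul_one]
    rw [Finset.sum_congr rfl fun k _ => this k]
    have hsum : (∑ k, (M k * A * (M k)ᴴ) ⊗ₖ B) = (∑ k, M k * A * (M k)ᴴ) ⊗ₖ B := by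
      ext ⟨i, j⟩ ⟨p, l⟩
      simp [Matrix.sum_apply, kronecker_apply, Finset.sum_mul]
    rw [hsum, hfix' A hA]
  exact this
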